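/- The sequence g_3(n) satisfies the linear recurrence g_3(n) = 10·g_3(n-1) − 27·g_3(n-2) + 20·g_3(n-3) for all n ≥ 5. -/

import Mathlib

set_option linter.unusedTactic false
set_option linter.unreachableTactic false
set_option linter.unnecessarySeqFocus false

open Finset

open Finset

def cs (d : List ℕ) (j : ℕ) : ℕ := d.getD j 3

def SS (d : List ℕ) (r : ℕ) : Set (ℕ → ℕ → ℕ) :=
  {M | (∀ i j, r + 1 ≤ i → M i j = 0) ∧
       (∀ i j, i + d.length + 1 ≤ j → M i j = 0) ∧
       (∀ i j, d.length + r ≤ j → M i j = 0) ∧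
       (∀ i, i ≤ r → ∑ j ∈ Finset.range (d.length + r), M i j = 3) ∧
       (∀ j, j < d.length + r → ∑ i ∈ Finset.range (r + 1), M i j = cs d j)}

noncomputable def NN (d : List ℕ) (r : ℕ) : ℕ := (SS d r).ncard

lemma cs_ge (d : List ℕ) (j : ℕ) (h : d.length ≤ j) : cs d j = 3 :=
  List.getD_eq_default _ _ h

lemma entry_le {d r M} (hM : M ∈ SS d r) : ∀ i j, M i j ≤ 3 := by
  obtain ⟨h1, h2, h3, h4, h5⟩ := hM
  intro i j
  by_cases hi : i ≤ r
  · by_cases hj : j < d.length + r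
    · calc M i j ≤ ∑ j' ∈ Finset.range (d.length + r), M i j' :=
          Finset.single_le_sum (fun _ _ => Nat.zero_le _) (Finset.mem_range.2 hj)
      _ = 3 := h4 i hi
    · simp [h3 i j (by omega)]
  · simp [h1 i j (by omega)]

lemma SS_finite (d : List ℕ) (r : ℕ) : (SS d r).Finite := by
  have : Set.InjOn (fun (M : ℕ → ℕ → ℕ) =>
      (fun (i : Fin (r+1)) (j : Fin (d.length + r)) => (⟨min (M i j) 3, by omega⟩ : Fin 4)))
      (SS d r) := by
    intro M1 hM1 M2 hM2 h
    funext i j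
    by_cases hi : i ≤ r
    · by_cases hj : j < d.length + r
      · have := congrFun (congrFun h ⟨i, by omega⟩) ⟨j, hj⟩
        simp only [Fin.mk.injEq] at this
        have b1 := entry_le hM1 i j
        have b2 := entry_le hM2 i j
        omega
      · rw [hM1.2.2.1 i j (by omega), hM2.2.2.1 i j (by omega)]
    · rw [hM1.1 i j (by omega), hM2.1 i j (by omega)]
  exact Set.Finite.of_finite_image (Set.toFinite _) this

lemma sum_range_drop (F : ℕ → ℕ) {k n : ℕ} (h : k ≤ n) (h0 : ∀ j, k ≤ j → F j = 0) :
    ∑ j ∈ Finset.range n, F j = ∑ j ∈ Finset.range k, F j :=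
  (Finset.sum_subset (Finset.range_subset_range.2 h)
    (fun x _ hx => h0 x (by simpa using hx))).symm

lemma sum_reindex₁ (F : ℕ → ℕ) (f : ℕ → ℕ) (hf : StrictMono f) {C C' : ℕ}
    (h1 : ∀ j' < C', f j' < C)
    (h2 : ∀ j < C, (∀ j' < C', f j' ≠ j) → F j = 0) :
    ∑ j' ∈ Finset.range C', F (f j') = ∑ j ∈ Finset.range C, F j := by
  rw [← Finset.sum_image (g := f) (f := F) (fun x _ y _ hxy => hf.injective hxy)]
  apply Finset.sum_subset
  · intro j hj
    simp only [Finset.mem_image, Finset.mem_range] at hj ⊢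
    obtain ⟨j', hj', rfl⟩ := hj
    exact h1 j' hj'
  · intro j hj hj'
    simp only [Finset.mem_image, Finset.mem_range, not_exists] at hj hj'
    exact h2 j hj (fun x hx hc => hj' x ⟨hx, hc⟩)

lemma sum_reindex₂ (F : ℕ → ℕ) (f g : ℕ → ℕ) (hf : StrictMono f)
    (hgf : ∀ x, g (f x) = x) {C C' : ℕ}
    (h1 : ∀ j' < C', f j' < C)
    (h3 : ∀ j', C' ≤ j' → f j' < C → F j' = 0) :
    ∑ j ∈ Finset.range C, (if f (g j) = j then F (g j) else 0) = ∑ j' ∈ Finset.range C', F j' := by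
  have key : ∀ j' < C', (if f (g (f j')) = f j' then F (g (f j')) else 0) = F j' := by
    intro j' _
    rw [hgf]
    simp
  rw [← sum_reindex₁ (fun j => if f (g j) = j then F (g j) else 0) f hf h1]
  · exact Finset.sum_congr rfl (fun j' hj' => key j' (Finset.mem_range.1 hj'))
  · intro j hj hmiss
    by_cases hlive : f (g j) = j
    · simp only [if_pos hlive]
      have : C' ≤ g j := by
        by_contra hc
        exact hmiss (g j) (by omega) hlive
      exact h3 (g j) this (by rw [hlive]; exact hj)
    · simp [hlive]
def Phi (v : ℕ → ℕ) (f g : ℕ → ℕ) (M' : ℕ → ℕ → ℕ) : ℕ → ℕ → ℕ :=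
  fun i j => if i = 0 then v j else if f (g j) = j then M' (i-1) (g j) else 0

lemma peel (d d' : List ℕ) (q : ℕ) (v : ℕ → ℕ) (f g : ℕ → ℕ)
    (hlen : d'.length ≤ d.length + 1)
    (hv0 : ∀ j, d.length + 1 ≤ j → v j = 0)
    (hvsum : ∑ j ∈ Finset.range (d.length + 1), v j = 3)
    (hmono : StrictMono f)
    (hhigh : ∀ j, d'.length ≤ j → f j = j + (d.length + 1 - d'.length))
    (hflow : ∀ j, j < d'.length → f j ≤ d.length)
    (hgf : ∀ j, g (f j) = j)
    (hlive : ∀ j', cs d (f j') = cs d' j' + v (f j'))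
    (hdead : ∀ j, j ≤ d.length → f (g j) ≠ j → v j = cs d j) :
    {M ∈ SS d (q+1) | ∀ j, M 0 j = v j}.ncard = NN d' q := by
  have hds : d'.length + (d.length + 1 - d'.length) = d.length + 1 := by omega
  set s := d.length + 1 - d'.length with hs
  have fact_high_live : ∀ j, d.length + 1 ≤ j → f (g j) = j ∧ g j = j - s := by
    intro j hj
    have h1 : f (j - s) = j := by rw [hhigh (j - s) (by omega)]; omega
    have h2 : g j = j - s := by rw [← hgf (j - s), h1]
    exact ⟨by rw [h2, h1], h2⟩
  have hfr : ∀ j' < d'.length + q, f j' < d.length + (q+1) := by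
    intro j' hj'
    by_cases hlow : j' < d'.length
    · have := hflow j' hlow; omega
    · rw [hhigh j' (by omega)]; omega
  have hinj : Function.Injective (Phi v f g) := by
    intro M1 M2 h
    funext i j
    have h1 := congrFun (congrFun h (i+1)) (f j)
    simp only [Phi, Nat.add_sub_cancel, hgf, if_pos rfl, Nat.succ_ne_zero, if_neg,
      Nat.add_eq_zero] at h1
    simpa using h1
  have himg : {M ∈ SS d (q+1) | ∀ j, M 0 j = v j} = Phi v f g '' SS d' q := by
    apply Set.eq_of_subset_of_subset
    · -- fiber ⊆ image
      rintro M ⟨⟨h1, h2, h3, h4, h5⟩, hv⟩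
      have hdz : ∀ j, f (g j) ≠ j → ∀ i, 1 ≤ i → M i j = 0 := by
        intro j hdead' i hi1
        have hjle : j ≤ d.length := by
          by_contra hc
          exact hdead' (fact_high_live j (by omega)).1
        have hcol := h5 j (by omega)
        rw [Finset.sum_range_succ'] at hcol
        have hv0j : M 0 j = cs d j := by rw [hv j]; exact hdead j hjle hdead'
        have hz : ∑ i ∈ Finset.range (q+1), M (i+1) j = 0 := by omega
        by_cases hir : i ≤ q + 1
        · have := (Finset.sum_eq_zero_iff.1 hz) (i-1) (Finset.mem_range.2 (by omega))
          have hii : i - 1 + 1 = i := by omega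
          rwa [hii] at this
        · exact h1 i j (by omega)
      refine ⟨fun i' j' => M (i'+1) (f j'), ⟨?_, ?_, ?_, ?_, ?_⟩, ?_⟩
      · intro i j hi
        exact h1 (i+1) (f j) (by omega)
      · intro i' j' hsh
        apply h2
        rw [hhigh j' (by omega)]
        omega
      · intro i' j' hj'
        apply h3
        rw [hhigh j' (by omega)]
        omega
      · intro i' hi'
        rw [sum_reindex₁ (M (i'+1)) f hmono hfr ?_]
        · exact h4 (i'+1) (by omega)
        · intro j hj hmiss
          by_cases hl : f (g j) = j
          · exfalso
            have hge : d'.length + q ≤ g j := by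
              by_contra hc
              exact hmiss (g j) (by omega) hl
            rw [hhigh (g j) (by omega)] at hl
            omega
          · exact hdz j hl (i'+1) (by omega)
      · intro j' hj'
        have hcol := h5 (f j') (hfr j' hj')
        rw [Finset.sum_range_succ'] at hcol
        have hm0 : M 0 (f j') = v (f j') := hv _
        have hl := hlive j'
        have goal' : ∑ i ∈ Finset.range (q+1), M (i+1) (f j') = cs d' j' := by omega
        exact goal'
      · funext i j
        by_cases hi : i = 0
        · subst hi
          simp only [Phi, if_pos rfl]
          exact (hv j).symm
        · simp only [Phi, if_neg hi]
          by_cases hl : f (g j) = j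
          · rw [if_pos hl]
            show M (i-1+1) (f (g j)) = M i j
            rw [hl]
            congr 1
            omega
          · rw [if_neg hl]
            exact (hdz j hl i (by omega)).symm
    · -- image ⊆ fiber
      rintro M ⟨M', ⟨h1', h2', h3', h4', h5'⟩, rfl⟩
      refine ⟨⟨?_, ?_, ?_, ?_, ?_⟩, fun j => by simp [Phi]⟩
      · intro i j hi
        have hi0 : i ≠ 0 := by omega
        by_cases hl : f (g j) = j
        · simp [Phi, hi0, hl, h1' (i-1) (g j) (by omega)]
        · simp [Phi, hi0, hl]
      · intro i j hsh
        by_cases hi0 : i = 0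
        · subst hi0
          simp [Phi, hv0 j (by omega)]
        · by_cases hl : f (g j) = j
          · have hjbig : d.length + 1 ≤ j := by omega
            have hgj : g j = j - s := (fact_high_live j hjbig).2
            have : (i-1) + d'.length + 1 ≤ g j := by omega
            simp [Phi, hi0, hl, h2' (i-1) (g j) this]
          · simp [Phi, hi0, hl]
      · intro i j hj
        by_cases hi0 : i = 0
        · subst hi0
          simp [Phi, hv0 j (by omega)]
        · by_cases hl : f (g j) = j
          · have hjbig : d.length + 1 ≤ j := by omega
            have hgj : g j = j - s := (fact_high_live j hjbig).2
            have : d'.length + q ≤ g j := by omega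
            simp [Phi, hi0, hl, h3' (i-1) (g j) this]
          · simp [Phi, hi0, hl]
      · intro i hi
        by_cases hi0 : i = 0
        · subst hi0
          have heq : ∀ j ∈ Finset.range (d.length + (q+1)), Phi v f g M' 0 j = v j :=
            fun j _ => by simp [Phi]
          rw [Finset.sum_congr rfl heq, sum_range_drop v (by omega) hv0]
          exact hvsum
        · have heq : ∀ j ∈ Finset.range (d.length + (q+1)),
              Phi v f g M' i j = (if f (g j) = j then M' (i-1) (g j) else 0) :=
            fun j _ => by simp [Phi, hi0]
          rw [Finset.sum_congr rfl heq,
            sum_reindex₂ (M' (i-1)) f g hmono hgf hfr (fun j' hj1 _ => h3' (i-1) j' hj1)]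
          exact h4' (i-1) (by omega)
      · intro j hj
        rw [Finset.sum_range_succ']
        have hF0 : Phi v f g M' 0 j = v j := by simp [Phi]
        have hFi : ∀ i, Phi v f g M' (i+1) j = (if f (g j) = j then M' i (g j) else 0) :=
          fun i => by simp [Phi]
        rw [hF0, Finset.sum_congr rfl (fun i _ => hFi i)]
        by_cases hl : f (g j) = j
        · have hgjlt : g j < d'.length + q := by
            by_contra hc
            rw [hhigh (g j) (by omega)] at hl
            omega
          have hsum : ∑ i ∈ Finset.range (q+1), M' i (g j) = cs d' (g j) := h5' (g j) hgjlt
          have hlv := hlive (g j)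
          rw [hl] at hlv
          simp only [if_pos hl]
          omega
        · simp only [if_neg hl]
          have hjle : j ≤ d.length := by
            by_contra hc
            exact hl (fact_high_live j (by omega)).1
          have := hdead j hjle hl
          simp
          omega
  rw [himg, Set.ncard_image_of_injective _ hinj]
  rfl
/-! ### Column swap -/

def sw : ℕ → ℕ := fun j => if j = 0 then 1 else if j = 1 then 0 else j

lemma sw_inv (j : ℕ) : sw (sw j) = j := by rcases j with _|_|j <;> simp [sw]

lemma sum_sw (F : ℕ → ℕ) {n : ℕ} (hn : 2 ≤ n) :
    ∑ j ∈ Finset.range n, F (sw j) = ∑ j ∈ Finset.range n, F j := by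
  refine Finset.sum_nbij' sw sw ?_ ?_ ?_ ?_ ?_
  · intro a ha
    simp only [Finset.mem_range] at *
    rcases a with _|_|a <;> simp [sw] <;> omega
  · intro a ha
    simp only [Finset.mem_range] at *
    rcases a with _|_|a <;> simp [sw] <;> omega
  · intro a _; exact sw_inv a
  · intro a _; exact sw_inv a
  · intro a _; rfl

lemma swap_mem {r : ℕ} {M : ℕ → ℕ → ℕ} (d d' : List ℕ) (hd : d.length = 2) (hd' : d'.length = 2)
    (hcs : ∀ j, cs d' j = cs d (sw j)) (hM : M ∈ SS d r) :
    (fun i j => M i (sw j)) ∈ SS d' r := by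
  obtain ⟨h1, h2, h3, h4, h5⟩ := hM
  refine ⟨?_, ?_, ?_, ?_, ?_⟩
  · intro i j hi; exact h1 i (sw j) (by omega)
  · intro i j hj; apply h2; rcases j with _|_|j <;> simp [sw] <;> omega
  · intro i j hj; apply h3; rcases j with _|_|j <;> simp [sw] <;> omega
  · intro i hi
    rw [show d'.length + r = d.length + r by omega, sum_sw (M i) (by omega)]
    exact h4 i hi
  · intro j hj
    rw [hcs j]
    apply h5
    rcases j with _|_|j <;> simp [sw] <;> omega

lemma swapBC (r : ℕ) : NN [1,2] r = NN [2,1] r := by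
  have hinj : Function.Injective (fun (M : ℕ → ℕ → ℕ) => fun i j => M i (sw j)) := by
    intro M1 M2 h
    funext i j
    have := congrFun (congrFun h i) (sw j)
    simpa [sw_inv] using this
  have himg : SS [1,2] r = (fun (M : ℕ → ℕ → ℕ) => fun i j => M i (sw j)) '' SS [2,1] r := by
    ext M
    constructor
    · intro hM
      refine ⟨fun i j => M i (sw j), swap_mem [1,2] [2,1] rfl rfl ?_ hM, ?_⟩
      · intro j
        rcases j with _ | _ | j <;> simp [cs, sw]
      · funext i j; simp [sw_inv]
    · rintro ⟨M', hM', rfl⟩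
      refine swap_mem [2,1] [1,2] rfl rfl ?_ hM'
      intro j
      rcases j with _ | _ | j <;> simp [cs, sw]
  rw [NN, NN, himg, Set.ncard_image_of_injective _ hinj]

/-! ### Fibers -/

def Fib (d : List ℕ) (r : ℕ) (v : ℕ → ℕ) : Set (ℕ → ℕ → ℕ) :=
  {M ∈ SS d r | ∀ j, M 0 j = v j}

lemma Fib_finite (d : List ℕ) (r : ℕ) (v : ℕ → ℕ) : (Fib d r v).Finite :=
  (SS_finite d r).subset (Set.sep_subset _ _)

lemma Fib_disj {d : List ℕ} {r : ℕ} {v w : ℕ → ℕ} (j0 : ℕ) (h : v j0 ≠ w j0) :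
    Disjoint (Fib d r v) (Fib d r w) := by
  rw [Set.disjoint_left]
  rintro M ⟨_, hv⟩ ⟨_, hw⟩
  exact h ((hv j0).symm.trans (hw j0))

lemma row0_zero {d : List ℕ} {r : ℕ} {M : ℕ → ℕ → ℕ} (hM : M ∈ SS d r) :
    ∀ j, d.length + 1 ≤ j → M 0 j = 0 := fun j hj => hM.2.1 0 j (by omega)

lemma row0_sum {d : List ℕ} {r : ℕ} {M : ℕ → ℕ → ℕ} (hM : M ∈ SS d r) (hr : 1 ≤ r) :
    ∑ j ∈ Finset.range (d.length + 1), M 0 j = 3 := by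
  rw [← sum_range_drop (M 0) (show d.length + 1 ≤ d.length + r by omega) (row0_zero hM)]
  exact hM.2.2.2.1 0 (by omega)

lemma row0_le {d : List ℕ} {r : ℕ} {M : ℕ → ℕ → ℕ} (hM : M ∈ SS d r) (j : ℕ)
    (hj : j < d.length + r) : M 0 j ≤ cs d j := by
  rw [← hM.2.2.2.2 j hj]
  exact Finset.single_le_sum (f := fun i => M i j) (fun _ _ => Nat.zero_le _)
    (Finset.mem_range.2 (Nat.succ_pos r))
/-! ### Row-0 value patterns and column embeddings -/

def vA (x : ℕ) : ℕ → ℕ := fun j => if j = 0 then x else if j = 1 then 3 - x else 0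
def vB (x y : ℕ) : ℕ → ℕ :=
  fun j => if j = 0 then x else if j = 1 then y else if j = 2 then 3 - x - y else 0
def vC (x y z : ℕ) : ℕ → ℕ :=
  fun j => if j = 0 then x else if j = 1 then y else if j = 2 then z
    else if j = 3 then 3 - x - y - z else 0

def fsk (k : ℕ) : ℕ → ℕ := fun j => if j < k then j else j + 1
def gsk (k : ℕ) : ℕ → ℕ := fun j => if j < k then j else j - 1

lemma fsk_mono (k : ℕ) : StrictMono (fsk k) := by
  intro a b h; simp only [fsk]; split_ifs <;> omega

lemma gf_sk (k j : ℕ) : gsk k (fsk k j) = j := by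
  simp only [fsk, gsk]; split_ifs <;> omega

lemma recA (q : ℕ) : NN [3] (q+1) = 2 * NN [3] q + 2 * NN [2,1] q := by
  have hfin : ∀ v, (Fib [3] (q+1) v).Finite := fun v => Fib_finite [3] (q+1) v
  have hcov : SS [3] (q+1) =
      Fib [3] (q+1) (vA 0) ∪ (Fib [3] (q+1) (vA 1) ∪ (Fib [3] (q+1) (vA 2) ∪
        Fib [3] (q+1) (vA 3))) := by
    apply Set.eq_of_subset_of_subset
    · intro M hM
      have hz := row0_zero hM
      have hsum := row0_sum hM (by omega)
      rw [show ([3] : List ℕ).length + 1 = 2 from rfl, Finset.sum_range_succ,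
        Finset.sum_range_one] at hsum
      have key : ∀ x, M 0 0 = x → ∀ j, M 0 j = vA x j := by
        intro x hx j
        rcases j with _ | _ | j
        · simpa [vA] using hx
        · simp only [vA]; norm_num; omega
        · simp only [vA]; norm_num
          exact hz (j+2) (by simp only [List.length_cons, List.length_nil]; omega)
      have hx : M 0 0 = 0 ∨ M 0 0 = 1 ∨ M 0 0 = 2 ∨ M 0 0 = 3 := by omega
      rcases hx with h | h | h | h
      · exact Or.inl ⟨hM, key 0 h⟩
      · exact Or.inr (Or.inl ⟨hM, key 1 h⟩)
      · exact Or.inr (Or.inr (Or.inl ⟨hM, key 2 h⟩))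
      · exact Or.inr (Or.inr (Or.inr ⟨hM, key 3 h⟩))
    · rintro M (⟨h, -⟩ | ⟨h, -⟩ | ⟨h, -⟩ | ⟨h, -⟩) <;> exact h
  have e0 : (Fib [3] (q+1) (vA 0)).ncard = NN [3] q := by
    refine peel [3] [3] q (vA 0) (fsk 1) (gsk 1) (by simp) ?_ (by decide) (fsk_mono 1)
      ?_ ?_ (fun j => gf_sk 1 j) ?_ ?_
    · intro j hj; simp only [List.length] at hj
      rcases j with _ | _ | j <;> first | omega | simp [vA]
    · intro j hj; simp only [List.length] at hj ⊢
      simp only [fsk]; rw [if_neg (by omega)]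
    · intro j hj; simp only [List.length] at hj ⊢
      simp only [fsk]; rw [if_pos (by omega)]; omega
    · intro j'; rcases j' with _ | _ | j' <;> simp [cs, vA, fsk]
    · intro j hj hne; simp only [List.length] at hj
      interval_cases j
      · exact absurd (by decide) hne
      · decide
  have e1 : (Fib [3] (q+1) (vA 1)).ncard = NN [2,1] q := by
    refine peel [3] [2,1] q (vA 1) id id (by simp) ?_ (by decide) strictMono_id
      ?_ ?_ (fun j => rfl) ?_ ?_
    · intro j hj; simp only [List.length] at hj
      rcases j with _ | _ | j <;> first | omega | simp [vA]
    · intro j hj; simp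
    · intro j hj; simp only [id_eq, List.length] at *; omega
    · intro j'; rcases j' with _ | _ | j' <;> simp [cs, vA]
    · intro j hj hne; exact absurd rfl hne
  have e2 : (Fib [3] (q+1) (vA 2)).ncard = NN [1,2] q := by
    refine peel [3] [1,2] q (vA 2) id id (by simp) ?_ (by decide) strictMono_id
      ?_ ?_ (fun j => rfl) ?_ ?_
    · intro j hj; simp only [List.length] at hj
      rcases j with _ | _ | j <;> first | omega | simp [vA]
    · intro j hj; simp
    · intro j hj; simp only [id_eq, List.length] at *; omega
    · intro j'; rcases j' with _ | _ | j' <;> simp [cs, vA]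
    · intro j hj hne; exact absurd rfl hne
  have e3 : (Fib [3] (q+1) (vA 3)).ncard = NN [3] q := by
    refine peel [3] [3] q (vA 3) (fsk 0) (gsk 0) (by simp) ?_ (by decide) (fsk_mono 0)
      ?_ ?_ (fun j => gf_sk 0 j) ?_ ?_
    · intro j hj; simp only [List.length] at hj
      rcases j with _ | _ | j <;> first | omega | simp [vA]
    · intro j hj; simp only [List.length] at hj ⊢
      simp only [fsk]; rw [if_neg (by omega)]
    · intro j hj; simp only [List.length] at hj; interval_cases j; decide
    · intro j'; rcases j' with _ | _ | j' <;> simp [cs, vA, fsk]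
    · intro j hj hne; simp only [List.length] at hj
      interval_cases j
      · decide
      · exact absurd (by decide) hne
  have hd1 : Disjoint (Fib [3] (q+1) (vA 0))
      (Fib [3] (q+1) (vA 1) ∪ (Fib [3] (q+1) (vA 2) ∪ Fib [3] (q+1) (vA 3))) :=
    Set.disjoint_union_right.2 ⟨Fib_disj 0 (by decide),
      Set.disjoint_union_right.2 ⟨Fib_disj 0 (by decide), Fib_disj 0 (by decide)⟩⟩
  have hd2 : Disjoint (Fib [3] (q+1) (vA 1)) (Fib [3] (q+1) (vA 2) ∪ Fib [3] (q+1) (vA 3)) :=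
    Set.disjoint_union_right.2 ⟨Fib_disj 0 (by decide), Fib_disj 0 (by decide)⟩
  have hd3 : Disjoint (Fib [3] (q+1) (vA 2)) (Fib [3] (q+1) (vA 3)) := Fib_disj 0 (by decide)
  rw [NN, hcov, Set.ncard_union_eq hd1 (hfin _) (((hfin _).union ((hfin _).union (hfin _)))),
    Set.ncard_union_eq hd2 (hfin _) ((hfin _).union (hfin _)),
    Set.ncard_union_eq hd3 (hfin _) (hfin _), e0, e1, e2, e3, swapBC]
  ring
def f01 : ℕ → ℕ := fun j => j + 2
def g01 : ℕ → ℕ := fun j => j - 2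
def f02 : ℕ → ℕ := fun j => if j = 0 then 1 else j + 2
def g02 : ℕ → ℕ := fun j => if j ≤ 1 then 0 else j - 2
def f12 : ℕ → ℕ := fun j => if j = 0 then 0 else j + 2
def g12 : ℕ → ℕ := fun j => if j ≤ 2 then 0 else j - 2
def f012 : ℕ → ℕ := fun j => j + 3
def g012 : ℕ → ℕ := fun j => j - 3

lemma f01_mono : StrictMono f01 := fun a b h => by simp only [f01]; omega
lemma gf01 (j : ℕ) : g01 (f01 j) = j := by simp only [f01, g01]; omega
lemma f02_mono : StrictMono f02 := fun a b h => by
  rcases a with _ | a <;> rcases b with _ | b <;> simp [f02] <;> omega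
lemma gf02 (j : ℕ) : g02 (f02 j) = j := by
  rcases j with _ | j <;> simp [f02, g02]
lemma f12_mono : StrictMono f12 := fun a b h => by
  rcases a with _ | a <;> rcases b with _ | b <;> simp [f12] <;> omega
lemma gf12 (j : ℕ) : g12 (f12 j) = j := by
  rcases j with _ | j <;> simp [f12, g12]
lemma f012_mono : StrictMono f012 := fun a b h => by simp only [f012]; omega
lemma gf012 (j : ℕ) : g012 (f012 j) = j := by simp only [f012, g012]; omega

lemma recB (q : ℕ) : NN [2,1] (q+1) = NN [3] q + 4 * NN [2,1] q + NN [1,1,1] q := by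
  have hfin : ∀ v, (Fib [2,1] (q+1) v).Finite := fun v => Fib_finite [2,1] (q+1) v
  have hcov : SS [2,1] (q+1) =
      Fib [2,1] (q+1) (vB 0 0) ∪ (Fib [2,1] (q+1) (vB 0 1) ∪ (Fib [2,1] (q+1) (vB 1 0) ∪
        (Fib [2,1] (q+1) (vB 1 1) ∪ (Fib [2,1] (q+1) (vB 2 0) ∪ Fib [2,1] (q+1) (vB 2 1))))) := by
    apply Set.eq_of_subset_of_subset
    · intro M hM
      have hz := row0_zero hM
      have hsum := row0_sum hM (by omega)
      rw [show ([2,1] : List ℕ).length + 1 = 3 from rfl, Finset.sum_range_succ,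
        Finset.sum_range_succ, Finset.sum_range_one] at hsum
      have hb0 : M 0 0 ≤ 2 := by
        have := row0_le hM 0 (by simp only [List.length_cons, List.length_nil]; omega)
        simpa [cs] using this
      have hb1 : M 0 1 ≤ 1 := by
        have := row0_le hM 1 (by simp only [List.length_cons, List.length_nil]; omega)
        simpa [cs] using this
      have key : ∀ x y, M 0 0 = x → M 0 1 = y → ∀ j, M 0 j = vB x y j := by
        intro x y hx hy j
        rcases j with _ | _ | _ | j
        · simpa [vB] using hx
        · simpa [vB] using hy
        · simp only [vB]; norm_num; omega
        · simp only [vB]; norm_num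
          exact hz (j+3) (by simp only [List.length_cons, List.length_nil]; omega)
      have hx : (M 0 0 = 0 ∧ M 0 1 = 0) ∨ (M 0 0 = 0 ∧ M 0 1 = 1) ∨ (M 0 0 = 1 ∧ M 0 1 = 0) ∨
          (M 0 0 = 1 ∧ M 0 1 = 1) ∨ (M 0 0 = 2 ∧ M 0 1 = 0) ∨ (M 0 0 = 2 ∧ M 0 1 = 1) := by
        omega
      rcases hx with ⟨h, h'⟩ | ⟨h, h'⟩ | ⟨h, h'⟩ | ⟨h, h'⟩ | ⟨h, h'⟩ | ⟨h, h'⟩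
      · exact Or.inl ⟨hM, key _ _ h h'⟩
      · exact Or.inr (Or.inl ⟨hM, key _ _ h h'⟩)
      · exact Or.inr (Or.inr (Or.inl ⟨hM, key _ _ h h'⟩))
      · exact Or.inr (Or.inr (Or.inr (Or.inl ⟨hM, key _ _ h h'⟩)))
      · exact Or.inr (Or.inr (Or.inr (Or.inr (Or.inl ⟨hM, key _ _ h h'⟩))))
      · exact Or.inr (Or.inr (Or.inr (Or.inr (Or.inr ⟨hM, key _ _ h h'⟩))))
    · rintro M (⟨h, -⟩ | ⟨h, -⟩ | ⟨h, -⟩ | ⟨h, -⟩ | ⟨h, -⟩ | ⟨h, -⟩) <;> exact h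
  have e1 : (Fib [2,1] (q+1) (vB 0 0)).ncard = NN [2,1] q := by
    refine peel [2,1] [2,1] q (vB 0 0) (fsk 2) (gsk 2) (by simp) ?_ (by decide) (fsk_mono 2)
      ?_ ?_ (fun j => gf_sk 2 j) ?_ ?_
    · intro j hj; simp only [List.length_cons, List.length_nil] at hj
      rcases j with _ | _ | _ | j <;> first | omega | simp [vB]
    · intro j hj; simp only [List.length_cons, List.length_nil] at hj ⊢
      simp only [fsk]; rw [if_neg (by omega)]
    · intro j hj; simp only [List.length_cons, List.length_nil] at hj ⊢
      interval_cases j <;> decide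
    · intro j'
      rcases j' with _ | _ | _ | j' <;>
        first
          | (simp [cs, vB, fsk]; done)
          | (simp only [fsk]; rw [if_neg (by omega)]; simp [cs, vB])
    · intro j hj hne; simp only [List.length_cons, List.length_nil] at hj
      interval_cases j <;> first | decide | (exact absurd (by decide) hne)
  have e2 : (Fib [2,1] (q+1) (vB 0 1)).ncard = NN [2,1] q := by
    refine peel [2,1] [2,1] q (vB 0 1) (fsk 1) (gsk 1) (by simp) ?_ (by decide) (fsk_mono 1)
      ?_ ?_ (fun j => gf_sk 1 j) ?_ ?_
    · intro j hj; simp only [List.length_cons, List.length_nil] at hj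
      rcases j with _ | _ | _ | j <;> first | omega | simp [vB]
    · intro j hj; simp only [List.length_cons, List.length_nil] at hj ⊢
      simp only [fsk]; rw [if_neg (by omega)]
    · intro j hj; simp only [List.length_cons, List.length_nil] at hj ⊢
      interval_cases j <;> decide
    · intro j'
      rcases j' with _ | _ | _ | j' <;>
        first
          | (simp [cs, vB, fsk]; done)
          | (simp only [fsk]; rw [if_neg (by omega)]; simp [cs, vB])
    · intro j hj hne; simp only [List.length_cons, List.length_nil] at hj
      interval_cases j <;> first | decide | (exact absurd (by decide) hne)
  have e3 : (Fib [2,1] (q+1) (vB 1 0)).ncard = NN [1,1,1] q := by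
    refine peel [2,1] [1,1,1] q (vB 1 0) id id (by simp) ?_ (by decide) strictMono_id
      ?_ ?_ (fun j => rfl) ?_ ?_
    · intro j hj; simp only [List.length_cons, List.length_nil] at hj
      rcases j with _ | _ | _ | j <;> first | omega | simp [vB]
    · intro j hj; simp
    · intro j hj; simp only [id_eq, List.length_cons, List.length_nil] at *; omega
    · intro j'; rcases j' with _ | _ | _ | j' <;> simp [cs, vB]
    · intro j hj hne; exact absurd rfl hne
  have e4 : (Fib [2,1] (q+1) (vB 1 1)).ncard = NN [1,2] q := by
    refine peel [2,1] [1,2] q (vB 1 1) (fsk 1) (gsk 1) (by simp) ?_ (by decide) (fsk_mono 1)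
      ?_ ?_ (fun j => gf_sk 1 j) ?_ ?_
    · intro j hj; simp only [List.length_cons, List.length_nil] at hj
      rcases j with _ | _ | _ | j <;> first | omega | simp [vB]
    · intro j hj; simp only [List.length_cons, List.length_nil] at hj ⊢
      simp only [fsk]; rw [if_neg (by omega)]
    · intro j hj; simp only [List.length_cons, List.length_nil] at hj ⊢
      interval_cases j <;> decide
    · intro j'
      rcases j' with _ | _ | _ | j' <;>
        first
          | (simp [cs, vB, fsk]; done)
          | (simp only [fsk]; rw [if_neg (by omega)]; simp [cs, vB])
    · intro j hj hne; simp only [List.length_cons, List.length_nil] at hj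
      interval_cases j <;> first | decide | (exact absurd (by decide) hne)
  have e5 : (Fib [2,1] (q+1) (vB 2 0)).ncard = NN [1,2] q := by
    refine peel [2,1] [1,2] q (vB 2 0) (fsk 0) (gsk 0) (by simp) ?_ (by decide) (fsk_mono 0)
      ?_ ?_ (fun j => gf_sk 0 j) ?_ ?_
    · intro j hj; simp only [List.length_cons, List.length_nil] at hj
      rcases j with _ | _ | _ | j <;> first | omega | simp [vB]
    · intro j hj; simp only [List.length_cons, List.length_nil] at hj ⊢
      simp only [fsk]; rw [if_neg (by omega)]
    · intro j hj; simp only [List.length_cons, List.length_nil] at hj ⊢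
      interval_cases j <;> decide
    · intro j'
      rcases j' with _ | _ | _ | j' <;>
        first
          | (simp [cs, vB, fsk]; done)
          | (simp only [fsk]; rw [if_neg (by omega)]; simp [cs, vB])
    · intro j hj hne; simp only [List.length_cons, List.length_nil] at hj
      interval_cases j <;> first | decide | (exact absurd (by decide) hne)
  have e6 : (Fib [2,1] (q+1) (vB 2 1)).ncard = NN [3] q := by
    refine peel [2,1] [3] q (vB 2 1) f01 g01 (by simp) ?_ (by decide) f01_mono
      (fun j _ => rfl) ?_ (fun j => gf01 j) ?_ ?_
    · intro j hj; simp only [List.length_cons, List.length_nil] at hj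
      rcases j with _ | _ | _ | j <;> first | omega | simp [vB]
    · intro j hj; simp only [List.length_cons, List.length_nil] at hj ⊢
      interval_cases j <;> decide
    · intro j'; rcases j' with _ | _ | _ | j' <;> simp [cs, vB, f01]
    · intro j hj hne; simp only [List.length_cons, List.length_nil] at hj
      interval_cases j <;> first | decide | (exact absurd (by decide) hne)
  have hd5 : Disjoint (Fib [2,1] (q+1) (vB 2 0)) (Fib [2,1] (q+1) (vB 2 1)) :=
    Fib_disj 1 (by decide)
  have hd4 : Disjoint (Fib [2,1] (q+1) (vB 1 1))
      (Fib [2,1] (q+1) (vB 2 0) ∪ Fib [2,1] (q+1) (vB 2 1)) :=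
    Set.disjoint_union_right.2 ⟨Fib_disj 0 (by decide), Fib_disj 0 (by decide)⟩
  have hd3 : Disjoint (Fib [2,1] (q+1) (vB 1 0))
      (Fib [2,1] (q+1) (vB 1 1) ∪ (Fib [2,1] (q+1) (vB 2 0) ∪ Fib [2,1] (q+1) (vB 2 1))) :=
    Set.disjoint_union_right.2 ⟨Fib_disj 1 (by decide),
      Set.disjoint_union_right.2 ⟨Fib_disj 0 (by decide), Fib_disj 0 (by decide)⟩⟩
  have hd2 : Disjoint (Fib [2,1] (q+1) (vB 0 1))
      (Fib [2,1] (q+1) (vB 1 0) ∪ (Fib [2,1] (q+1) (vB 1 1) ∪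
        (Fib [2,1] (q+1) (vB 2 0) ∪ Fib [2,1] (q+1) (vB 2 1)))) :=
    Set.disjoint_union_right.2 ⟨Fib_disj 0 (by decide),
      Set.disjoint_union_right.2 ⟨Fib_disj 0 (by decide),
        Set.disjoint_union_right.2 ⟨Fib_disj 0 (by decide), Fib_disj 0 (by decide)⟩⟩⟩
  have hd1 : Disjoint (Fib [2,1] (q+1) (vB 0 0))
      (Fib [2,1] (q+1) (vB 0 1) ∪ (Fib [2,1] (q+1) (vB 1 0) ∪ (Fib [2,1] (q+1) (vB 1 1) ∪
        (Fib [2,1] (q+1) (vB 2 0) ∪ Fib [2,1] (q+1) (vB 2 1))))) :=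
    Set.disjoint_union_right.2 ⟨Fib_disj 1 (by decide),
      Set.disjoint_union_right.2 ⟨Fib_disj 0 (by decide),
        Set.disjoint_union_right.2 ⟨Fib_disj 0 (by decide),
          Set.disjoint_union_right.2 ⟨Fib_disj 0 (by decide), Fib_disj 0 (by decide)⟩⟩⟩⟩
  rw [NN, hcov,
    Set.ncard_union_eq hd1 (hfin _)
      (((hfin _).union ((hfin _).union ((hfin _).union ((hfin _).union (hfin _)))))),
    Set.ncard_union_eq hd2 (hfin _)
      (((hfin _).union ((hfin _).union ((hfin _).union (hfin _))))),
    Set.ncard_union_eq hd3 (hfin _) (((hfin _).union ((hfin _).union (hfin _)))),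
    Set.ncard_union_eq hd4 (hfin _) ((hfin _).union (hfin _)),
    Set.ncard_union_eq hd5 (hfin _) (hfin _), e1, e2, e3, e4, e5, e6, swapBC]
  ring
lemma recC (q : ℕ) : NN [1,1,1] (q+1) = NN [3] q + 3 * NN [2,1] q + 4 * NN [1,1,1] q := by
  have hfin : ∀ v, (Fib [1,1,1] (q+1) v).Finite := fun v => Fib_finite [1,1,1] (q+1) v
  have hcov : SS [1,1,1] (q+1) =
      Fib [1,1,1] (q+1) (vC 0 0 0) ∪ (Fib [1,1,1] (q+1) (vC 0 0 1) ∪ (Fib [1,1,1] (q+1) (vC 0 1 0) ∪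
        (Fib [1,1,1] (q+1) (vC 0 1 1) ∪ (Fib [1,1,1] (q+1) (vC 1 0 0) ∪ (Fib [1,1,1] (q+1) (vC 1 0 1) ∪
          (Fib [1,1,1] (q+1) (vC 1 1 0) ∪ Fib [1,1,1] (q+1) (vC 1 1 1))))))) := by
    apply Set.eq_of_subset_of_subset
    · intro M hM
      have hz := row0_zero hM
      have hsum := row0_sum hM (by omega)
      rw [show ([1,1,1] : List ℕ).length + 1 = 4 from rfl, Finset.sum_range_succ,
        Finset.sum_range_succ, Finset.sum_range_succ, Finset.sum_range_one] at hsum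
      have hb0 : M 0 0 ≤ 1 := by
        have := row0_le hM 0 (by simp only [List.length_cons, List.length_nil]; omega)
        simpa [cs] using this
      have hb1 : M 0 1 ≤ 1 := by
        have := row0_le hM 1 (by simp only [List.length_cons, List.length_nil]; omega)
        simpa [cs] using this
      have hb2 : M 0 2 ≤ 1 := by
        have := row0_le hM 2 (by simp only [List.length_cons, List.length_nil]; omega)
        simpa [cs] using this
      have key : ∀ x y z, M 0 0 = x → M 0 1 = y → M 0 2 = z → ∀ j, M 0 j = vC x y z j := by
        intro x y z hx hy hz2 j
        rcases j with _ | _ | _ | _ | j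
        · simpa [vC] using hx
        · simpa [vC] using hy
        · simpa [vC] using hz2
        · simp only [vC]; norm_num; omega
        · simp only [vC]; norm_num
          exact hz (j+4) (by simp only [List.length_cons, List.length_nil]; omega)
      have hx : (M 0 0 = 0 ∧ M 0 1 = 0 ∧ M 0 2 = 0) ∨ (M 0 0 = 0 ∧ M 0 1 = 0 ∧ M 0 2 = 1) ∨
          (M 0 0 = 0 ∧ M 0 1 = 1 ∧ M 0 2 = 0) ∨ (M 0 0 = 0 ∧ M 0 1 = 1 ∧ M 0 2 = 1) ∨
          (M 0 0 = 1 ∧ M 0 1 = 0 ∧ M 0 2 = 0) ∨ (M 0 0 = 1 ∧ M 0 1 = 0 ∧ M 0 2 = 1) ∨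
          (M 0 0 = 1 ∧ M 0 1 = 1 ∧ M 0 2 = 0) ∨ (M 0 0 = 1 ∧ M 0 1 = 1 ∧ M 0 2 = 1) := by
        omega
      rcases hx with ⟨h, h', h''⟩ | ⟨h, h', h''⟩ | ⟨h, h', h''⟩ | ⟨h, h', h''⟩ | ⟨h, h', h''⟩ |
        ⟨h, h', h''⟩ | ⟨h, h', h''⟩ | ⟨h, h', h''⟩
      · exact Or.inl ⟨hM, key _ _ _ h h' h''⟩
      · exact Or.inr (Or.inl ⟨hM, key _ _ _ h h' h''⟩)
      · exact Or.inr (Or.inr (Or.inl ⟨hM, key _ _ _ h h' h''⟩))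
      · exact Or.inr (Or.inr (Or.inr (Or.inl ⟨hM, key _ _ _ h h' h''⟩)))
      · exact Or.inr (Or.inr (Or.inr (Or.inr (Or.inl ⟨hM, key _ _ _ h h' h''⟩))))
      · exact Or.inr (Or.inr (Or.inr (Or.inr (Or.inr (Or.inl ⟨hM, key _ _ _ h h' h''⟩)))))
      · exact Or.inr (Or.inr (Or.inr (Or.inr (Or.inr (Or.inr (Or.inl ⟨hM, key _ _ _ h h' h''⟩))))))
      · exact Or.inr (Or.inr (Or.inr (Or.inr (Or.inr (Or.inr (Or.inr ⟨hM, key _ _ _ h h' h''⟩))))))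
    · rintro M (⟨h, -⟩ | ⟨h, -⟩ | ⟨h, -⟩ | ⟨h, -⟩ | ⟨h, -⟩ | ⟨h, -⟩ | ⟨h, -⟩ | ⟨h, -⟩) <;> exact h
  have e1 : (Fib [1,1,1] (q+1) (vC 0 0 0)).ncard = NN [1,1,1] q := by
    refine peel [1,1,1] [1,1,1] q (vC 0 0 0) (fsk 3) (gsk 3) (by simp) ?_ (by decide) (fsk_mono 3)
      ?_ ?_ (fun j => gf_sk 3 j) ?_ ?_
    · intro j hj; simp only [List.length_cons, List.length_nil] at hj
      rcases j with _ | _ | _ | _ | j <;> first | omega | simp [vC]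
    · intro j hj; simp only [List.length_cons, List.length_nil] at hj ⊢
      simp only [fsk]; rw [if_neg (by omega)]
    · intro j hj; simp only [List.length_cons, List.length_nil] at hj ⊢
      interval_cases j <;> decide
    · intro j'
      rcases j' with _ | _ | _ | _ | j' <;>
        first
          | (simp [cs, vC, fsk]; done)
          | (simp only [fsk]; rw [if_neg (by omega)]; simp [cs, vC])
    · intro j hj hne; simp only [List.length_cons, List.length_nil] at hj
      interval_cases j <;> first | decide | (exact absurd (by decide) hne)
  have e2 : (Fib [1,1,1] (q+1) (vC 0 0 1)).ncard = NN [1,1,1] q := by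
    refine peel [1,1,1] [1,1,1] q (vC 0 0 1) (fsk 2) (gsk 2) (by simp) ?_ (by decide) (fsk_mono 2)
      ?_ ?_ (fun j => gf_sk 2 j) ?_ ?_
    · intro j hj; simp only [List.length_cons, List.length_nil] at hj
      rcases j with _ | _ | _ | _ | j <;> first | omega | simp [vC]
    · intro j hj; simp only [List.length_cons, List.length_nil] at hj ⊢
      simp only [fsk]; rw [if_neg (by omega)]
    · intro j hj; simp only [List.length_cons, List.length_nil] at hj ⊢
      interval_cases j <;> decide
    · intro j'
      rcases j' with _ | _ | _ | _ | j' <;>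
        first
          | (simp [cs, vC, fsk]; done)
          | (simp only [fsk]; rw [if_neg (by omega)]; simp [cs, vC])
    · intro j hj hne; simp only [List.length_cons, List.length_nil] at hj
      interval_cases j <;> first | decide | (exact absurd (by decide) hne)
  have e3 : (Fib [1,1,1] (q+1) (vC 0 1 0)).ncard = NN [1,1,1] q := by
    refine peel [1,1,1] [1,1,1] q (vC 0 1 0) (fsk 1) (gsk 1) (by simp) ?_ (by decide) (fsk_mono 1)
      ?_ ?_ (fun j => gf_sk 1 j) ?_ ?_
    · intro j hj; simp only [List.length_cons, List.length_nil] at hj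
      rcases j with _ | _ | _ | _ | j <;> first | omega | simp [vC]
    · intro j hj; simp only [List.length_cons, List.length_nil] at hj ⊢
      simp only [fsk]; rw [if_neg (by omega)]
    · intro j hj; simp only [List.length_cons, List.length_nil] at hj ⊢
      interval_cases j <;> decide
    · intro j'
      rcases j' with _ | _ | _ | _ | j' <;>
        first
          | (simp [cs, vC, fsk]; done)
          | (simp only [fsk]; rw [if_neg (by omega)]; simp [cs, vC])
    · intro j hj hne; simp only [List.length_cons, List.length_nil] at hj
      interval_cases j <;> first | decide | (exact absurd (by decide) hne)
  have e4 : (Fib [1,1,1] (q+1) (vC 0 1 1)).ncard = NN [1,2] q := by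
    refine peel [1,1,1] [1,2] q (vC 0 1 1) f12 g12 (by simp) ?_ (by decide) f12_mono
      ?_ ?_ (fun j => gf12 j) ?_ ?_
    · intro j hj; simp only [List.length_cons, List.length_nil] at hj
      rcases j with _ | _ | _ | _ | j <;> first | omega | simp [vC]
    · intro j hj; simp only [List.length_cons, List.length_nil] at hj ⊢
      simp only [f12]; rw [if_neg (by omega)]
    · intro j hj; simp only [List.length_cons, List.length_nil] at hj ⊢
      interval_cases j <;> decide
    · intro j'
      rcases j' with _ | _ | _ | _ | j' <;>
        first
          | (simp [cs, vC, f12]; done)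
          | (simp only [f12]; rw [if_neg (by omega)]; simp [cs, vC])
    · intro j hj hne; simp only [List.length_cons, List.length_nil] at hj
      interval_cases j <;> first | decide | (exact absurd (by decide) hne)
  have e5 : (Fib [1,1,1] (q+1) (vC 1 0 0)).ncard = NN [1,1,1] q := by
    refine peel [1,1,1] [1,1,1] q (vC 1 0 0) (fsk 0) (gsk 0) (by simp) ?_ (by decide) (fsk_mono 0)
      ?_ ?_ (fun j => gf_sk 0 j) ?_ ?_
    · intro j hj; simp only [List.length_cons, List.length_nil] at hj
      rcases j with _ | _ | _ | _ | j <;> first | omega | simp [vC]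
    · intro j hj; simp only [List.length_cons, List.length_nil] at hj ⊢
      simp only [fsk]; rw [if_neg (by omega)]
    · intro j hj; simp only [List.length_cons, List.length_nil] at hj ⊢
      interval_cases j <;> decide
    · intro j'
      rcases j' with _ | _ | _ | _ | j' <;>
        first
          | (simp [cs, vC, fsk]; done)
          | (simp only [fsk]; rw [if_neg (by omega)]; simp [cs, vC])
    · intro j hj hne; simp only [List.length_cons, List.length_nil] at hj
      interval_cases j <;> first | decide | (exact absurd (by decide) hne)
  have e6 : (Fib [1,1,1] (q+1) (vC 1 0 1)).ncard = NN [1,2] q := by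
    refine peel [1,1,1] [1,2] q (vC 1 0 1) f02 g02 (by simp) ?_ (by decide) f02_mono
      ?_ ?_ (fun j => gf02 j) ?_ ?_
    · intro j hj; simp only [List.length_cons, List.length_nil] at hj
      rcases j with _ | _ | _ | _ | j <;> first | omega | simp [vC]
    · intro j hj; simp only [List.length_cons, List.length_nil] at hj ⊢
      simp only [f02]; rw [if_neg (by omega)]
    · intro j hj; simp only [List.length_cons, List.length_nil] at hj ⊢
      interval_cases j <;> decide
    · intro j'
      rcases j' with _ | _ | _ | _ | j' <;>
        first
          | (simp [cs, vC, f02]; done)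
          | (simp only [f02]; rw [if_neg (by omega)]; simp [cs, vC])
    · intro j hj hne; simp only [List.length_cons, List.length_nil] at hj
      interval_cases j <;> first | decide | (exact absurd (by decide) hne)
  have e7 : (Fib [1,1,1] (q+1) (vC 1 1 0)).ncard = NN [1,2] q := by
    refine peel [1,1,1] [1,2] q (vC 1 1 0) f01 g01 (by simp) ?_ (by decide) f01_mono
      (fun j _ => rfl) ?_ (fun j => gf01 j) ?_ ?_
    · intro j hj; simp only [List.length_cons, List.length_nil] at hj
      rcases j with _ | _ | _ | _ | j <;> first | omega | simp [vC]
    · intro j hj; simp only [List.length_cons, List.length_nil] at hj ⊢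
      interval_cases j <;> decide
    · intro j'
      rcases j' with _ | _ | _ | _ | j' <;> simp [cs, vC, f01]
    · intro j hj hne; simp only [List.length_cons, List.length_nil] at hj
      interval_cases j <;> first | decide | (exact absurd (by decide) hne)
  have e8 : (Fib [1,1,1] (q+1) (vC 1 1 1)).ncard = NN [3] q := by
    refine peel [1,1,1] [3] q (vC 1 1 1) f012 g012 (by simp) ?_ (by decide) f012_mono
      (fun j _ => rfl) ?_ (fun j => gf012 j) ?_ ?_
    · intro j hj; simp only [List.length_cons, List.length_nil] at hj
      rcases j with _ | _ | _ | _ | j <;> first | omega | simp [vC]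
    · intro j hj; simp only [List.length_cons, List.length_nil] at hj ⊢
      interval_cases j <;> decide
    · intro j'
      rcases j' with _ | _ | _ | _ | j' <;> simp [cs, vC, f012]
    · intro j hj hne; simp only [List.length_cons, List.length_nil] at hj
      interval_cases j <;> first | decide | (exact absurd (by decide) hne)
  have hd7 : Disjoint (Fib [1,1,1] (q+1) (vC 1 1 0)) (Fib [1,1,1] (q+1) (vC 1 1 1)) :=
    Fib_disj 2 (by decide)
  have hd6 : Disjoint (Fib [1,1,1] (q+1) (vC 1 0 1))
      (Fib [1,1,1] (q+1) (vC 1 1 0) ∪ Fib [1,1,1] (q+1) (vC 1 1 1)) :=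
    Set.disjoint_union_right.2 ⟨Fib_disj 1 (by decide), Fib_disj 1 (by decide)⟩
  have hd5 : Disjoint (Fib [1,1,1] (q+1) (vC 1 0 0))
      (Fib [1,1,1] (q+1) (vC 1 0 1) ∪ (Fib [1,1,1] (q+1) (vC 1 1 0) ∪
        Fib [1,1,1] (q+1) (vC 1 1 1))) :=
    Set.disjoint_union_right.2 ⟨Fib_disj 2 (by decide),
      Set.disjoint_union_right.2 ⟨Fib_disj 1 (by decide), Fib_disj 1 (by decide)⟩⟩
  have hd4 : Disjoint (Fib [1,1,1] (q+1) (vC 0 1 1))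
      (Fib [1,1,1] (q+1) (vC 1 0 0) ∪ (Fib [1,1,1] (q+1) (vC 1 0 1) ∪
        (Fib [1,1,1] (q+1) (vC 1 1 0) ∪ Fib [1,1,1] (q+1) (vC 1 1 1)))) :=
    Set.disjoint_union_right.2 ⟨Fib_disj 0 (by decide),
      Set.disjoint_union_right.2 ⟨Fib_disj 0 (by decide),
        Set.disjoint_union_right.2 ⟨Fib_disj 0 (by decide), Fib_disj 0 (by decide)⟩⟩⟩
  have hd3 : Disjoint (Fib [1,1,1] (q+1) (vC 0 1 0))
      (Fib [1,1,1] (q+1) (vC 0 1 1) ∪ (Fib [1,1,1] (q+1) (vC 1 0 0) ∪ (Fib [1,1,1] (q+1) (vC 1 0 1) ∪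
        (Fib [1,1,1] (q+1) (vC 1 1 0) ∪ Fib [1,1,1] (q+1) (vC 1 1 1))))) :=
    Set.disjoint_union_right.2 ⟨Fib_disj 2 (by decide),
      Set.disjoint_union_right.2 ⟨Fib_disj 0 (by decide),
        Set.disjoint_union_right.2 ⟨Fib_disj 0 (by decide),
          Set.disjoint_union_right.2 ⟨Fib_disj 0 (by decide), Fib_disj 0 (by decide)⟩⟩⟩⟩
  have hd2 : Disjoint (Fib [1,1,1] (q+1) (vC 0 0 1))
      (Fib [1,1,1] (q+1) (vC 0 1 0) ∪ (Fib [1,1,1] (q+1) (vC 0 1 1) ∪ (Fib [1,1,1] (q+1) (vC 1 0 0) ∪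
        (Fib [1,1,1] (q+1) (vC 1 0 1) ∪ (Fib [1,1,1] (q+1) (vC 1 1 0) ∪
          Fib [1,1,1] (q+1) (vC 1 1 1)))))) :=
    Set.disjoint_union_right.2 ⟨Fib_disj 1 (by decide),
      Set.disjoint_union_right.2 ⟨Fib_disj 1 (by decide),
        Set.disjoint_union_right.2 ⟨Fib_disj 0 (by decide),
          Set.disjoint_union_right.2 ⟨Fib_disj 0 (by decide),
            Set.disjoint_union_right.2 ⟨Fib_disj 0 (by decide), Fib_disj 0 (by decide)⟩⟩⟩⟩⟩
  have hd1 : Disjoint (Fib [1,1,1] (q+1) (vC 0 0 0))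
      (Fib [1,1,1] (q+1) (vC 0 0 1) ∪ (Fib [1,1,1] (q+1) (vC 0 1 0) ∪ (Fib [1,1,1] (q+1) (vC 0 1 1) ∪
        (Fib [1,1,1] (q+1) (vC 1 0 0) ∪ (Fib [1,1,1] (q+1) (vC 1 0 1) ∪ (Fib [1,1,1] (q+1) (vC 1 1 0) ∪
          Fib [1,1,1] (q+1) (vC 1 1 1))))))) :=
    Set.disjoint_union_right.2 ⟨Fib_disj 2 (by decide),
      Set.disjoint_union_right.2 ⟨Fib_disj 1 (by decide),
        Set.disjoint_union_right.2 ⟨Fib_disj 1 (by decide),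
          Set.disjoint_union_right.2 ⟨Fib_disj 0 (by decide),
            Set.disjoint_union_right.2 ⟨Fib_disj 0 (by decide),
              Set.disjoint_union_right.2 ⟨Fib_disj 0 (by decide), Fib_disj 0 (by decide)⟩⟩⟩⟩⟩⟩
  rw [NN, hcov,
    Set.ncard_union_eq hd1 (hfin _) (((hfin _).union ((hfin _).union ((hfin _).union
      ((hfin _).union ((hfin _).union ((hfin _).union (hfin _)))))))),
    Set.ncard_union_eq hd2 (hfin _) (((hfin _).union ((hfin _).union ((hfin _).union
      ((hfin _).union ((hfin _).union (hfin _))))))),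
    Set.ncard_union_eq hd3 (hfin _) (((hfin _).union ((hfin _).union ((hfin _).union
      ((hfin _).union (hfin _)))))),
    Set.ncard_union_eq hd4 (hfin _) (((hfin _).union ((hfin _).union ((hfin _).union (hfin _))))),
    Set.ncard_union_eq hd5 (hfin _) (((hfin _).union ((hfin _).union (hfin _)))),
    Set.ncard_union_eq hd6 (hfin _) ((hfin _).union (hfin _)),
    Set.ncard_union_eq hd7 (hfin _) (hfin _), e1, e2, e3, e4, e5, e6, e7, e8, swapBC]
  ring


/-- `g t n` is the number of `n × n` matrices of nonnegative integers whose
`(i,j)` entry is `0` whenever `j ≥ i + 2` (`0`-based indices) and all of whose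
row sums and column sums equal `t`. -/
noncomputable def g (t n : ℕ) : ℕ :=
  Set.ncard {M : Matrix (Fin n) (Fin n) ℕ |
    (∀ i j : Fin n, (i : ℕ) + 2 ≤ (j : ℕ) → M i j = 0) ∧
    (∀ i : Fin n, ∑ j, M i j = t) ∧
    (∀ j : Fin n, ∑ i, M i j = t)}


def Phig (q : ℕ) (M : Matrix (Fin (q+1)) (Fin (q+1)) ℕ) : ℕ → ℕ → ℕ :=
  fun i j => if h : i < q + 1 ∧ j < q + 1 then M ⟨i, h.1⟩ ⟨j, h.2⟩ else 0

lemma cs3 (j : ℕ) : cs [3] j = 3 := by rcases j with _ | j <;> simp [cs]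

lemma sum_Phig_row (q : ℕ) (M : Matrix (Fin (q+1)) (Fin (q+1)) ℕ) (i : Fin (q+1)) :
    ∑ j ∈ Finset.range (q+1), Phig q M i j = ∑ j, M i j := by
  rw [← Fin.sum_univ_eq_sum_range (fun j => Phig q M ↑i j) (q+1)]
  apply Finset.sum_congr rfl
  intro j _
  simp [Phig, i.isLt, j.isLt]

lemma sum_Phig_col (q : ℕ) (M : Matrix (Fin (q+1)) (Fin (q+1)) ℕ) (j : Fin (q+1)) :
    ∑ i ∈ Finset.range (q+1), Phig q M i j = ∑ i, M i j := by
  rw [← Fin.sum_univ_eq_sum_range (fun i => Phig q M i ↑j) (q+1)]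
  apply Finset.sum_congr rfl
  intro i _
  simp [Phig, i.isLt, j.isLt]

lemma glink (q : ℕ) : g 3 (q+1) = NN [3] q := by
  have hinj : Function.Injective (Phig q) := by
    intro M1 M2 h
    funext i j
    have := congrFun (congrFun h ↑i) ↑j
    simpa [Phig, i.isLt, j.isLt] using this
  have hlen : ([3] : List ℕ).length + q = q + 1 := by
    simp only [List.length_cons, List.length_nil]; omega
  have himg : SS [3] q = Phig q ''
      {M : Matrix (Fin (q+1)) (Fin (q+1)) ℕ |
        (∀ i j : Fin (q+1), (i : ℕ) + 2 ≤ (j : ℕ) → M i j = 0) ∧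
        (∀ i : Fin (q+1), ∑ j, M i j = 3) ∧
        (∀ j : Fin (q+1), ∑ i, M i j = 3)} := by
    apply Set.eq_of_subset_of_subset
    · rintro M ⟨h1, h2, h3, h4, h5⟩
      refine ⟨fun i j => M ↑i ↑j, ⟨?_, ?_, ?_⟩, ?_⟩
      · intro i j hij
        exact h2 ↑i ↑j (by simp only [List.length_cons, List.length_nil]; omega)
      · intro i
        have h4' := h4 ↑i (by omega)
        rw [hlen] at h4'
        rw [Fin.sum_univ_eq_sum_range (fun j => M ↑i j) (q+1)]
        exact h4'
      · intro j
        have h5' := h5 ↑j (by omega)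
        rw [cs3] at h5'
        rw [Fin.sum_univ_eq_sum_range (fun i => M i ↑j) (q+1)]
        exact h5' 
      · funext i j
        by_cases hij : i < q + 1 ∧ j < q + 1
        · simp [Phig, hij]
        · simp only [Phig, dif_neg hij]
          rcases not_and_or.1 hij with hi | hj
          · exact (h1 i j (by omega)).symm
          · exact (h3 i j (by omega)).symm
    · rintro N ⟨M, ⟨hsh, hrow, hcol⟩, rfl⟩
      refine ⟨?_, ?_, ?_, ?_, ?_⟩
      · intro i j hi
        simp only [Phig]
        rw [dif_neg (by omega : ¬(i < q + 1 ∧ j < q + 1))]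
      · intro i j hij
        by_cases h : i < q + 1 ∧ j < q + 1
        · simp only [Phig, dif_pos h]
          exact hsh ⟨i, h.1⟩ ⟨j, h.2⟩ (by simp only [List.length_cons, List.length_nil] at hij; show i + 2 ≤ j; omega)
        · simp only [Phig, dif_neg h]
      · intro i j hj
        rw [hlen] at hj
        simp only [Phig]
        rw [dif_neg (by omega : ¬(i < q + 1 ∧ j < q + 1))]
      · intro i hi
        rw [hlen, sum_Phig_row q M ⟨i, by omega⟩]
        · exact hrow _
      · intro j hj
        rw [hlen] at hj
        rw [cs3, sum_Phig_col q M ⟨j, hj⟩]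
        exact hcol _
  rw [g, NN, himg, Set.ncard_image_of_injective _ hinj]



/-- The sequence `g 3 n` satisfies the linear recurrence
`g 3 n = 10 * g 3 (n-1) - 27 * g 3 (n-2) + 20 * g 3 (n-3)` for all `n ≥ 5`. -/
theorem g_three_recurrence :
    ∀ n : ℕ, 5 ≤ n →
      (g 3 n : ℤ) =
        10 * (g 3 (n - 1) : ℤ) - 27 * (g 3 (n - 2) : ℤ) + 20 * (g 3 (n - 3) : ℤ) := by
  intro n hn
  obtain ⟨m, rfl⟩ : ∃ m, n = m + 5 := ⟨n - 5, by omega⟩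
  have E0 : g 3 (m+5) = NN [3] (m+4) := by
    rw [show m + 5 = (m+4)+1 by omega]; exact glink _
  have E1 : g 3 (m+5-1) = NN [3] (m+3) := by
    rw [show m + 5 - 1 = (m+3)+1 by omega]; exact glink _
  have E2 : g 3 (m+5-2) = NN [3] (m+2) := by
    rw [show m + 5 - 2 = (m+2)+1 by omega]; exact glink _
  have E3 : g 3 (m+5-3) = NN [3] (m+1) := by
    rw [show m + 5 - 3 = (m+1)+1 by omega]; exact glink _
  have rA1 := recA (m+3)
  have rA2 := recA (m+2)
  have rA3 := recA (m+1)
  have rB2 := recB (m+2)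
  have rB3 := recB (m+1)
  have rC3 := recC (m+1)
  rw [show m+3+1 = m+4 by omega] at rA1
  rw [show m+2+1 = m+3 by omega] at rA2 rB2
  rw [show m+1+1 = m+2 by omega] at rA3 rB3 rC3
  rw [E0, E1, E2, E3]
  omega
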